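/- Suppose the Cauchy problem y^{(m)}(z) = A y(z), y^{(k)}(0) = y_k (k = 0,…,m−1) has a solution y in 𝔄_loc(𝔅), i.e., a locally analytic 𝔅-valued solution y(z) = Σ_{j≥0} c_j z^j with values in 𝒟(A). Then necessarily each initial datum y_k belongs to E(A); that is, for each k ∈ {0,…,m−1} there exist constants c > 0 and α > 0 such that ‖A^n y_k‖ ≤ c·α^n for all n ∈ ℕ. -/

import Mathlib

open Filter Topology

/-!
STATEMENT 1. `ℂ_[p]` is axiomatized as a complete, algebraically closed, nonarchimedean
nontrivially normed field `K` with an isometric `ℚ_[p]`-algebra structure.  The closed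
operator `A` with domain `D = 𝒟(A)` is a submodule `D` together with a total linear map
`A` (its restriction to `D` is the operator), the graph `{(x, A x) | x ∈ D}` being closed.
-/

/-- `y(z) = Σ cⱼ zʲ` is a solution in `𝔄_loc(𝔅)` of the Cauchy problem
`y⁽ᵐ⁾ = A y`, `y⁽ᵏ⁾(0) = yinit k` (`k = 0, …, m-1`), on the disk `‖z‖ < r`. -/
def IsCauchySolution {K : Type*} [NontriviallyNormedField K]
    {B : Type*} [NormedAddCommGroup B] [NormedSpace K B]
    (D : Submodule K B) (A : B →ₗ[K] B) (m : ℕ) (yinit : ℕ → B)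
    (y : K → B) (c : ℕ → B) (r : ℝ) : Prop :=
  0 < r ∧
  Filter.Tendsto (fun j : ℕ => ‖c j‖ * r ^ j) Filter.atTop (nhds 0) ∧
  (∀ z : K, ‖z‖ < r → HasSum (fun j : ℕ => z ^ j • c j) (y z)) ∧
  (∀ z : K, ‖z‖ < r → y z ∈ D) ∧
  (∀ i < m, ∀ z : K, ‖z‖ < r → DifferentiableAt K (iteratedDeriv i y) z) ∧
  (∀ z : K, ‖z‖ < r → iteratedDeriv m y z = A (y z)) ∧
  (∀ k < m, iteratedDeriv k y 0 = yinit k ∧ (k.factorial : K) • c k = yinit k)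

theorem initial_data_entire_of_solvable
    {p : ℕ} [Fact p.Prime]
    {K : Type*} [NontriviallyNormedField K] [CompleteSpace K] [IsAlgClosed K]
    [IsUltrametricDist K] [Algebra ℚ_[p] K]
    (hK : ∀ q : ℚ_[p], ‖algebraMap ℚ_[p] K q‖ = ‖q‖)
    {B : Type*} [NormedAddCommGroup B] [NormedSpace K B] [CompleteSpace B]
    [IsUltrametricDist B]
    (D : Submodule K B) (A : B →ₗ[K] B)
    (hA : IsClosed {q : B × B | q.1 ∈ D ∧ A q.1 = q.2})
    (m : ℕ) (hm : 1 ≤ m) (yinit : ℕ → B)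
    (y : K → B) (c : ℕ → B) (r : ℝ)
    (hsol : IsCauchySolution D A m yinit y c r) :
    ∀ k < m, (∀ n : ℕ, (⇑A)^[n] (yinit k) ∈ D) ∧
      ∃ C > (0 : ℝ), ∃ α > (0 : ℝ), ∀ n : ℕ, ‖(⇑A)^[n] (yinit k)‖ ≤ C * α ^ n := by
  obtain ⟨hr, hbd, hsum, hD, hdiff, heqm, hini⟩ := hsol
  -- the formal power series of `y`
  set q : FormalMultilinearSeries K K B :=
    fun n => ContinuousMultilinearMap.mkPiRing K (Fin n) (c n) with hq
  have hqn : ∀ n, ‖q n‖ = ‖c n‖ := fun n => ContinuousMultilinearMap.norm_mkPiRing (c n)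
  have hmem : ∀ z : K, z ∈ Metric.eball (0 : K) (ENNReal.ofReal r) ↔ ‖z‖ < r := by
    intro z
    rw [mem_emetric_ball_zero_iff, ← ofReal_norm,
      ENNReal.ofReal_lt_ofReal_iff hr]
  have hball : HasFPowerSeriesOnBall y q 0 (ENNReal.ofReal r) := by
    refine ⟨?_, by simpa using hr, ?_⟩
    · refine FormalMultilinearSeries.le_radius_of_tendsto q (l := 0) ?_
      have : (r.toNNReal : ℝ) = r := Real.coe_toNNReal r hr.le
      simpa [hqn, this] using hbd
    · intro z hz
      rw [hmem] at hz
      have := hsum z hz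
      simpa [hq, ContinuousMultilinearMap.mkPiRing_apply] using this
  -- analyticity of all iterated derivatives on the ball
  have hAn : ∀ j : ℕ, AnalyticOnNhd K (iteratedDeriv j y)
      (Metric.eball (0 : K) (ENNReal.ofReal r)) := by
    intro j
    induction j with
    | zero => simpa using hball.analyticOnNhd
    | succ n ih => rw [iteratedDeriv_succ]; exact ih.deriv
  -- the key induction: all iterated derivatives take values in the graph
  have key : ∀ i : ℕ, ∀ z : K, ‖z‖ < r → iteratedDeriv i y z ∈ D ∧
      A (iteratedDeriv i y z) = iteratedDeriv (i + m) y z := by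
    intro i
    induction i with
    | zero =>
      intro z hz
      exact ⟨by simpa using hD z hz, by simpa using (heqm z hz).symm⟩
    | succ i ih =>
      intro z hz
      set f := iteratedDeriv i y
      set g := iteratedDeriv (i + m) y
      have hzball : z ∈ Metric.eball (0 : K) (ENNReal.ofReal r) := (hmem z).2 hz
      have hf : HasDerivAt f (deriv f z) z :=
        ((hAn i z hzball).differentiableAt).hasDerivAt
      have hg : HasDerivAt g (deriv g z) z :=
        ((hAn (i + m) z hzball).differentiableAt).hasDerivAt
      have hFG : HasDerivAt (fun w => (f w, g w)) (deriv f z, deriv g z) z := hf.prodMk hg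
      have hten := hasDerivAt_iff_tendsto_slope.mp hFG
      have hev : ∀ᶠ w in 𝓝[≠] z,
          slope (fun w => (f w, g w)) z w ∈ {q : B × B | q.1 ∈ D ∧ A q.1 = q.2} := by
        have hopen : IsOpen {w : K | ‖w‖ < r} := by
          have : {w : K | ‖w‖ < r} = Metric.ball (0 : K) r := by
            ext w; simp [Metric.mem_ball, dist_zero_right]
          rw [this]; exact Metric.isOpen_ball
        have hmemnhds : {w : K | ‖w‖ < r} ∈ 𝓝[≠] z :=
          nhdsWithin_le_nhds (hopen.mem_nhds hz)
        filter_upwards [hmemnhds] with w hw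
        have hwD := ih w hw
        have hzD := ih z hz
        rw [slope_def_module]
        constructor
        · exact D.smul_mem _ (D.sub_mem hwD.1 hzD.1)
        · simp only [Prod.smul_snd, Prod.smul_fst, Prod.fst_sub, Prod.snd_sub, map_smul, map_sub,
            hwD.2, hzD.2]
      have hmemG : (deriv f z, deriv g z) ∈ {q : B × B | q.1 ∈ D ∧ A q.1 = q.2} :=
        hA.mem_of_tendsto hten hev
      have h1 : deriv f z = iteratedDeriv (i + 1) y z := by rw [iteratedDeriv_succ]
      have h2 : deriv g z = iteratedDeriv (i + 1 + m) y z := by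
        rw [show i + 1 + m = (i + m) + 1 by ring, iteratedDeriv_succ]
      rw [h1, h2] at hmemG
      exact hmemG
  have h0 : (0 : ℝ) < r := hr
  have h0r : ‖(0 : K)‖ < r := by simpa using hr
  -- iteration formula
  have hiter : ∀ k n : ℕ, (⇑A)^[n] (iteratedDeriv k y 0) = iteratedDeriv (k + n * m) y 0 := by
    intro k n
    induction n with
    | zero => simp
    | succ n ih =>
      rw [Function.iterate_succ_apply', ih, (key (k + n * m) 0 h0r).2]
      ring_nf
  -- Taylor coefficients
  have hcoef : ∀ j : ℕ, iteratedDeriv j y 0 = (j.factorial : K) • c j := by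
    intro j
    have := hball.factorial_smul (1 : K) j
    rw [iteratedDeriv_eq_iteratedFDeriv]
    rw [← this]
    simp [hq, ContinuousMultilinearMap.mkPiRing_apply, Nat.cast_smul_eq_nsmul]
  -- norm of natural number casts in K is at most 1
  have hnat : ∀ N : ℕ, ‖(N : K)‖ ≤ 1 := by
    intro N
    have h1 : ((N : ℚ_[p]) : ℚ_[p]) = algebraMap ℚ_[p] ℚ_[p] (N : ℚ_[p]) := rfl
    have h2 : (N : K) = algebraMap ℚ_[p] K (N : ℚ_[p]) := by
      rw [map_natCast]
    rw [h2, hK]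
    have := Padic.norm_int_le_one (p := p) (N : ℤ)
    simpa using this
  -- bound on coefficients
  obtain ⟨C, hC⟩ := hbd.bddAbove_range
  have hCb : ∀ j : ℕ, ‖c j‖ * r ^ j ≤ C := fun j => hC ⟨j, rfl⟩
  have hcb : ∀ j : ℕ, ‖c j‖ ≤ C * (r⁻¹) ^ j := by
    intro j
    have hrj : (0 : ℝ) < r ^ j := pow_pos hr j
    have : ‖c j‖ = (‖c j‖ * r ^ j) * (r⁻¹) ^ j := by
      rw [mul_assoc, ← mul_pow, mul_inv_cancel₀ hr.ne', one_pow, mul_one]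
    rw [this]
    exact mul_le_mul_of_nonneg_right (hCb j) (by positivity)
  intro k hk
  have hyk : yinit k = iteratedDeriv k y 0 := ((hini k hk).1).symm
  constructor
  · intro n
    rw [hyk, hiter k n]
    exact (key (k + n * m) 0 h0r).1
  · refine ⟨(max C 1) * (r⁻¹) ^ k, by positivity, (r⁻¹) ^ m, by positivity, ?_⟩
    intro n
    rw [hyk, hiter k n, hcoef (k + n * m)]
    calc ‖((k + n * m).factorial : K) • c (k + n * m)‖
        ≤ 1 * ‖c (k + n * m)‖ := by
          rw [norm_smul]
          exact mul_le_mul_of_nonneg_right (hnat _) (norm_nonneg _)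
      _ = ‖c (k + n * m)‖ := one_mul _
      _ ≤ C * (r⁻¹) ^ (k + n * m) := hcb _
      _ ≤ (max C 1) * (r⁻¹) ^ (k + n * m) :=
          mul_le_mul_of_nonneg_right (le_max_left _ _) (by positivity)
      _ = (max C 1) * (r⁻¹) ^ k * ((r⁻¹) ^ m) ^ n := by
          rw [pow_add, mul_comm n m, pow_mul, mul_assoc]
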